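/- Let d ≥ 1 be an integer, let λ > 1, and define u on the ball B_{1/e} ⊆ ℝ^d by u(x) = (ln λ)^{-1} ln ln (1/|x|). Then for every γ > λ, every α > 0, and every τ with 0 < τ < 1/e, one has ∫_{B_τ} exp( α γ^{u(x)} ) dx = +∞. -/

import Mathlib

open MeasureTheory Real Filter ENNReal

noncomputable def nlI (d : ℕ) (p δ : ℝ) (u : EuclideanSpace ℝ (Fin d) → ℝ)
    (O : Set (EuclideanSpace ℝ (Fin d))) : ℝ≥0∞ :=
  ∫⁻ x in O, ∫⁻ y in O,
    (if δ < |u x - u y| then ENNReal.ofReal (δ ^ p / ‖x - y‖ ^ ((d : ℝ) + p)) else 0)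

/-- divergence of the exponential integral for the log-log function. -/
theorem stmt15 (d : ℕ) (hd : 1 ≤ d) (lam : ℝ) (hlam : 1 < lam) (γ : ℝ) (hγ : lam < γ)
    (α : ℝ) (hα : 0 < α) (τ : ℝ) (hτ1 : 0 < τ) (hτ2 : τ < 1 / Real.exp 1) :
    ∫⁻ x in Metric.ball (0 : EuclideanSpace ℝ (Fin d)) τ,
        ENNReal.ofReal
          (Real.exp (α * γ ^ ((Real.log lam)⁻¹ * Real.log (Real.log (1 / ‖x‖))))) = ⊤ := by
  set E := EuclideanSpace ℝ (Fin d)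
  haveI : Nontrivial E :=
    Module.nontrivial_of_finrank_pos (R := ℝ)
      (by rw [finrank_euclideanSpace_fin]; omega)
  have hγ0 : (0:ℝ) < γ := lt_trans (by linarith) hγ
  have hloglam : 0 < Real.log lam := Real.log_pos hlam
  set β : ℝ := Real.log γ / Real.log lam with hβdef
  have hβ : 1 < β := (one_lt_div hloglam).2 (Real.log_lt_log (by linarith) hγ)
  set T : ℝ := max 2 ((((d:ℝ)+1)/α) ^ (β-1)⁻¹) with hTdef
  have hT2 : 2 ≤ T := le_max_left _ _
  -- pointwise lower bound
  have key : ∀ x : E, x ≠ 0 → ‖x‖ ≤ Real.exp (-T) →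
      (1/‖x‖) ^ ((d:ℝ)+1) ≤
        Real.exp (α * γ ^ ((Real.log lam)⁻¹ * Real.log (Real.log (1 / ‖x‖)))) := by
    intro x hx0 hxT
    have hnx : 0 < ‖x‖ := norm_pos_iff.2 hx0
    set t : ℝ := Real.log (1 / ‖x‖) with htdef
    have ht : T ≤ t := by
      have : Real.exp T ≤ 1 / ‖x‖ := by
        rw [le_div_iff₀ hnx]
        calc Real.exp T * ‖x‖ ≤ Real.exp T * Real.exp (-T) :=
              mul_le_mul_of_nonneg_left hxT (Real.exp_pos _).le
        _ = 1 := by rw [← Real.exp_add, add_neg_cancel, Real.exp_zero]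
      calc T = Real.log (Real.exp T) := (Real.log_exp T).symm
      _ ≤ t := Real.log_le_log (Real.exp_pos _) this
    have ht1 : 1 < t := lt_of_lt_of_le (by linarith) ht
    have ht0 : 0 < t := by linarith
    -- γ ^ ((log λ)⁻¹ * log t) = t ^ β
    have hpow : γ ^ ((Real.log lam)⁻¹ * Real.log t) = t ^ β := by
      rw [Real.rpow_def_of_pos hγ0, Real.rpow_def_of_pos ht0]
      congr 1
      field_simp [hβdef]
      rw [hβdef, show Real.log lam * Real.log t * (Real.log γ / Real.log lam) = Real.log γ * Real.log t * (Real.log lam / Real.log lam) by ring, div_self hloglam.ne', mul_one]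
    rw [hpow]
    have hβ1 : 0 < β - 1 := by linarith
    -- α * t ^ β ≥ (d+1) * t
    have hαt : ((d:ℝ)+1) * t ≤ α * t ^ β := by
      have e1 : t ^ β = t ^ (β - 1) * t := by
        rw [← Real.rpow_add_one ht0.ne' (β-1)]; ring_nf
      have e2 : ((d:ℝ)+1)/α ≤ t ^ (β-1) := by
        have hc : (((d:ℝ)+1)/α) ^ (β-1)⁻¹ ≤ t := le_trans (le_max_right _ _) ht
        calc ((d:ℝ)+1)/α = ((((d:ℝ)+1)/α) ^ (β-1)⁻¹) ^ (β-1) :=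
              (Real.rpow_inv_rpow (by positivity) hβ1.ne').symm
        _ ≤ t ^ (β-1) :=
              Real.rpow_le_rpow (by positivity) hc hβ1.le
      calc ((d:ℝ)+1) * t = (((d:ℝ)+1)/α) * t * α := by field_simp
      _ ≤ t ^ (β-1) * t * α := by
            apply mul_le_mul_of_nonneg_right _ hα.le
            exact mul_le_mul_of_nonneg_right e2 ht0.le
      _ = α * t ^ β := by rw [e1]; ring
    calc (1/‖x‖) ^ ((d:ℝ)+1) = Real.exp (Real.log (1/‖x‖) * ((d:ℝ)+1)) :=
          Real.rpow_def_of_pos (by positivity) _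
    _ = Real.exp (((d:ℝ)+1) * t) := by rw [mul_comm]
    _ ≤ Real.exp (α * t ^ β) := Real.exp_le_exp.2 hαt
  -- main argument
  set v : ℝ≥0∞ := volume (Metric.ball (0:E) 1) with hvdef
  have hv0 : v ≠ 0 := (Metric.measure_ball_pos volume 0 one_pos).ne'
  have hvtop : v ≠ ⊤ := measure_ball_lt_top.ne
  set v₀ : ℝ := v.toReal with hv₀def
  have hv₀ : 0 < v₀ := ENNReal.toReal_pos hv0 hvtop
  set K : ℝ := 1 - (1/2:ℝ)^d with hKdef
  have hK : 0 < K := by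
    have : (1/2:ℝ)^d < 1 := pow_lt_one₀ (by norm_num) (by norm_num) (by omega)
    simp only [hKdef]; linarith
  apply ENNReal.eq_top_of_forall_nnreal_le
  intro M
  set r : ℝ := min (Real.exp (-T)) (min τ (K*v₀/((M:ℝ)+1))) with hrdef
  have hr0 : 0 < r := by
    apply lt_min (Real.exp_pos _)
    exact lt_min hτ1 (by positivity)
  have hrT : r ≤ Real.exp (-T) := min_le_left _ _
  have hrτ : r ≤ τ := le_trans (min_le_right _ _) (min_le_left _ _)
  have hrM : r ≤ K*v₀/((M:ℝ)+1) := le_trans (min_le_right _ _) (min_le_right _ _)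
  set A : Set E := Metric.ball 0 r \ Metric.ball 0 (r/2) with hAdef
  have hAmeas : MeasurableSet A :=
    measurableSet_ball.diff measurableSet_ball
  -- lower bound on A
  have hAsub : A ⊆ Metric.ball (0:E) τ :=
    (Set.diff_subset).trans (Metric.ball_subset_ball hrτ)
  have hbound : ∀ x ∈ A, ENNReal.ofReal ((1/r) ^ ((d:ℝ)+1)) ≤
      ENNReal.ofReal
        (Real.exp (α * γ ^ ((Real.log lam)⁻¹ * Real.log (Real.log (1 / ‖x‖))))) := by
    intro x hx
    obtain ⟨hx1, hx2⟩ := hx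
    rw [Metric.mem_ball, dist_zero_right] at hx1
    rw [Metric.mem_ball, dist_zero_right, not_lt] at hx2
    have hnx : 0 < ‖x‖ := lt_of_lt_of_le (by positivity) hx2
    have hx0 : x ≠ 0 := norm_pos_iff.1 hnx
    apply ENNReal.ofReal_le_ofReal
    refine le_trans ?_ (key x hx0 (hx1.le.trans hrT))
    apply Real.rpow_le_rpow (by positivity) _ (by positivity)
    exact one_div_le_one_div_of_le hnx hx1.le
  have hμA : volume A = ENNReal.ofReal (r^d - (r/2)^d) * v := by
    rw [hAdef, measure_diff (Metric.ball_subset_ball (by linarith))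
      measurableSet_ball.nullMeasurableSet measure_ball_lt_top.ne,
      Measure.addHaar_ball _ _ hr0.le, Measure.addHaar_ball _ _ (by linarith : (0:ℝ) ≤ r/2),
      finrank_euclideanSpace_fin, ← ENNReal.sub_mul (fun _ _ => hvtop),
      ENNReal.ofReal_sub _ (by positivity)]
  have hcalc : ENNReal.ofReal ((1/r) ^ ((d:ℝ)+1)) * volume A
      = ENNReal.ofReal (1/r * K) * v := by
    rw [hμA, ← mul_assoc, ← ENNReal.ofReal_mul (by positivity)]
    congr 2
    have : ((1:ℝ)/r) ^ ((d:ℝ)+1) = (1/r)^(d+1) := by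
      rw [← Real.rpow_natCast (1/r) (d+1)]; push_cast; ring_nf
    rw [this, hKdef]
    field_simp
    have h1 : r * (1 / r) ^ (d + 1) * r ^ d = 1 := by
      rw [show r * (1 / r) ^ (d + 1) * r ^ d = (r * r⁻¹) * (r * r⁻¹) ^ d by ring, mul_inv_cancel₀ hr0.ne']; simp
    rw [div_pow r 2 d, show r * (1 / r) ^ (d + 1) * (r ^ d - r ^ d / 2 ^ d) = (r * (1 / r) ^ (d + 1) * r ^ d) * (1 - 1 / 2 ^ d) by ring, h1, one_mul, one_div_pow]
  calc (M : ℝ≥0∞) = ENNReal.ofReal M := ENNReal.ofReal_coe_nnreal.symm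
  _ ≤ ENNReal.ofReal (1/r * K * v₀) := by
        apply ENNReal.ofReal_le_ofReal
        have h1 : (M:ℝ) + 1 ≤ 1/r * (K * v₀) := by
          rw [div_mul_eq_mul_div, one_mul, le_div_iff₀ hr0]
          calc ((M:ℝ)+1) * r ≤ ((M:ℝ)+1) * (K*v₀/((M:ℝ)+1)) := by
                apply mul_le_mul_of_nonneg_left hrM (by positivity)
          _ = K * v₀ := by field_simp
        nlinarith [M.coe_nonneg]
  _ = ENNReal.ofReal (1/r * K) * ENNReal.ofReal v₀ := by
        rw [← ENNReal.ofReal_mul (by positivity)]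
  _ = ENNReal.ofReal (1/r * K) * v := by rw [hv₀def, ENNReal.ofReal_toReal hvtop]
  _ = ENNReal.ofReal ((1/r) ^ ((d:ℝ)+1)) * volume A := hcalc.symm
  _ = ∫⁻ _ in A, ENNReal.ofReal ((1/r) ^ ((d:ℝ)+1)) := (setLIntegral_const _ _).symm
  _ ≤ ∫⁻ x in A, ENNReal.ofReal
        (Real.exp (α * γ ^ ((Real.log lam)⁻¹ * Real.log (Real.log (1 / ‖x‖))))) :=
      setLIntegral_mono' hAmeas hbound
  _ ≤ _ := lintegral_mono_set hAsub
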